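/- arXiv:1410.5967 — 2 statements merged into one kernel-verified Lean document; each statement's English description precedes it below -/
import Mathlib

section
/- Let b ≥ 1 be an integer and let (X_i)_{i∈ℤ} be nonnegative integers satisfying ∑_{i=0}^{N−1}(b − X_{−i}) → ∞ as N → ∞. Then the two-sided equations H_i = X_i + Q_{i−1} and Q_i = (H_i − b)_+ for i ∈ ℤ have a solution given by H_i = b + max_{j < i} ∑_{k=j+1}^{i}(X_k − b) and Q_i = max_{j ≤ i} ∑_{k=j+1}^{i}(X_k − b), where the maxima are over all integers j < i (resp. j ≤ i) and are attained. This solution is pointwise minimal among all solutions; moreover, for each i ∈ ℤ there exists i_0 < i with H_{i_0} < b and Q_{i_0} = 0; and it is the unique solution with the property that for every i there exists i_0 < i with Q_{i_0} = 0. -/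
open MeasureTheory ProbabilityTheory Filter Finset Complex

noncomputable section

/-- The tree function `T(z) = ∑_{n ≥ 1} n^{n-1} z^n / n!`. -/
def treeT (z : ℂ) : ℂ :=
  ∑' n : ℕ, ((n + 1 : ℂ) ^ n / (Nat.factorial (n + 1) : ℂ)) * z ^ (n + 1)

/-- `ω = e^{2πi/b}`, a primitive `b`-th root of unity. -/
def omegaRoot (b : ℕ) : ℂ := Complex.exp (2 * Real.pi * Complex.I / b)

/-- `ζ_ℓ(q) = T(ω^ℓ α e^{-α} q^{1/b}) / α`, where `w` is the chosen value of `q^{1/b}`. -/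
def zetaFun (b : ℕ) (α : ℝ) (ℓ : ℕ) (w : ℂ) : ℂ :=
  treeT (omegaRoot b ^ ℓ * ((α : ℂ) * (Real.exp (-α) : ℝ)) * w) / (α : ℂ)

/-- `ζ_ℓ = ζ_ℓ(1) = T(ω^ℓ α e^{-α})/α`. -/
def zetaL (b : ℕ) (α : ℝ) (ℓ : ℕ) : ℂ := zetaFun b α ℓ 1

/-- `T₀(bα) = b(1-α)/∏_{ℓ=1}^{b-1}(1-ζ_ℓ)`. -/
def T0 (b : ℕ) (α : ℝ) : ℂ :=
  (b : ℂ) * (1 - (α : ℂ)) / ∏ ℓ ∈ Finset.Ico 1 b, (1 - zetaL b α ℓ)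

/-! ### The exact (cyclic) model -/

/-- The number of keys with hash address `i` (cyclically), for the hash function `h`. -/
def Xex (m n : ℕ) (h : Fin n → ZMod m) (i : ℤ) : ℕ :=
  Nat.card {k : Fin n // h k = (i : ZMod m)}

/-- The overflow from bucket `i`: `Q_i = max_{j ≤ i} ∑_{k=j+1}^i (X_k - b)`. -/
def Qex (b m n : ℕ) (h : Fin n → ZMod m) (i : ℤ) : ℤ :=
  sSup {x : ℤ | ∃ j ≤ i, x = ∑ k ∈ Finset.Ioc j i, ((Xex m n h k : ℤ) - (b : ℤ))}

/-- The profile: `H_i = X_i + Q_{i-1}`. -/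
def Hex (b m n : ℕ) (h : Fin n → ZMod m) (i : ℤ) : ℤ :=
  (Xex m n h i : ℤ) + Qex b m n h (i - 1)

/-- The length of the block ending at bucket `m`: `m - i` where `i` is the largest index with
`1 ≤ i < m` and `H_i < b`, and `m` if there is no such index (`sSup ∅ = 0`). -/
def blockEndLen (b m n : ℕ) (h : Fin n → ZMod m) : ℕ :=
  m - sSup {i : ℕ | 1 ≤ i ∧ i < m ∧ Hex b m n h i < (b : ℤ)}

/-! ### The parking model -/

/-- The overflow sequence in the parking problem: `Q_0 = 0`,
`Q_{i+1} = (Q_i + X_{i+1} - b)₊` where buckets are numbered `0, …, m-1`. -/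
def parkQ (b : ℕ) {n : ℕ} (f : Fin n → ℕ) : ℕ → ℕ
  | 0 => 0
  | i + 1 => parkQ b f i + (Finset.univ.filter fun k => f k = i).card - b

/-! ### The infinite Poisson models -/

/-- Two-sided overflow: `Q_i = sup_{j ≤ i} ∑_{k=j+1}^i (X_k - b)`. -/
def Qpoi (b : ℕ) {Ω : Type*} (X : ℤ → Ω → ℕ) (i : ℤ) (ω : Ω) : ℤ :=
  sSup {x : ℤ | ∃ j ≤ i, x = ∑ k ∈ Finset.Ioc j i, ((X k ω : ℤ) - (b : ℤ))}

/-- Two-sided profile: `H_i = X_i + Q_{i-1}`. -/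
def Hpoi (b : ℕ) {Ω : Type*} (X : ℤ → Ω → ℕ) (i : ℤ) (ω : Ω) : ℤ :=
  (X i ω : ℤ) + Qpoi b X (i - 1) ω

/-- Each `X i` is Poisson distributed with parameter `r`. -/
def IsPoissonFam {Ω : Type*} [MeasurableSpace Ω] (μ : Measure Ω) (r : ℝ)
    {ι : Type*} (X : ι → Ω → ℕ) : Prop :=
  ∀ i k, μ {ω | X i ω = k} = ENNReal.ofReal (Real.exp (-r) * r ^ k / (Nat.factorial k))

/-- One-sided partial sums `S_i = X_1 + ⋯ + X_i`. -/
def S1 {Ω : Type*} (X : ℕ → Ω → ℕ) (i : ℕ) (ω : Ω) : ℕ := ∑ k ∈ Finset.Icc 1 i, X k ω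

/-- First-block length `B = min {i ≥ 1 : S_i < bi}`. -/
def blockB (b : ℕ) {Ω : Type*} (X : ℕ → Ω → ℕ) (ω : Ω) : ℕ :=
  sInf {i : ℕ | 1 ≤ i ∧ S1 X i ω < b * i}

/-- `Y_B = S_B - (B-1)b`, the number of keys in the final bucket of the first block. -/
def blockY (b : ℕ) {Ω : Type*} (X : ℕ → Ω → ℕ) (ω : Ω) : ℕ :=
  S1 X (blockB b X ω) ω - (blockB b X ω - 1) * b

end

/-- Two-sided explicit overflow `Q_i = max_{j ≤ i} ∑_{k=j+1}^i (X_k - b)`. -/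
noncomputable def sol2Q (b : ℕ) (X : ℤ → ℕ) (i : ℤ) : ℤ :=
  sSup {x : ℤ | ∃ j ≤ i, x = ∑ k ∈ Finset.Ioc j i, ((X k : ℤ) - (b : ℤ))}

/-- Two-sided explicit profile `H_i = b + max_{j < i} ∑_{k=j+1}^i (X_k - b)`. -/
noncomputable def sol2H (b : ℕ) (X : ℤ → ℕ) (i : ℤ) : ℤ :=
  (b : ℤ) + sSup {x : ℤ | ∃ j < i, x = ∑ k ∈ Finset.Ioc j i, ((X k : ℤ) - (b : ℤ))}

section Stmt2Aux

open Finset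

/-- Partial sum `∑_{k=j+1}^i (X_k - b)`. -/
private noncomputable def fS (b : ℕ) (X : ℤ → ℕ) (j i : ℤ) : ℤ :=
  ∑ k ∈ Finset.Ioc j i, ((X k : ℤ) - (b : ℤ))

private lemma fS_split (b : ℕ) (X : ℤ → ℕ) {j m i : ℤ} (h1 : j ≤ m) (h2 : m ≤ i) :
    fS b X j m + fS b X m i = fS b X j i := by
  unfold fS
  rw [← Finset.Ioc_union_Ioc_eq_Ioc h1 h2,
    Finset.sum_union (Finset.disjoint_left.mpr (fun a ha hb => by
      simp only [Finset.mem_Ioc] at ha hb; omega))]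

private lemma fS_self (b : ℕ) (X : ℤ → ℕ) (i : ℤ) : fS b X i i = 0 := by simp [fS]

private lemma fS_single (b : ℕ) (X : ℤ → ℕ) (i : ℤ) :
    fS b X (i - 1) i = (X i : ℤ) - b := by
  have h : Finset.Ioc (i - 1) i = {i} := by
    ext k; simp only [Finset.mem_Ioc, Finset.mem_singleton]; omega
  simp [fS, h]

private lemma fS_prefix (b : ℕ) (X : ℤ → ℕ) (n : ℕ) :
    fS b X (-(n : ℤ)) 0 = -∑ k ∈ Finset.range n, ((b : ℤ) - (X (-(k : ℤ)) : ℤ)) := by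
  induction n with
  | zero => simp [fS]
  | succ n ih =>
    have h1 : (-((n + 1 : ℕ) : ℤ)) ≤ -(n : ℤ) := by omega
    have h2 : (-(n : ℤ)) ≤ 0 := by omega
    have hsplit := fS_split b X h1 h2
    have hone : fS b X (-((n + 1 : ℕ) : ℤ)) (-(n : ℤ)) = (X (-(n : ℤ)) : ℤ) - b := by
      have : (-((n + 1 : ℕ) : ℤ)) = -(n : ℤ) - 1 := by push_cast [Nat.cast_add]; ring
      rw [this]; exact fS_single b X _
    rw [Finset.sum_range_succ]
    rw [← hsplit, hone, ih]
    ring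

private lemma fS_tail_neg (b : ℕ) (X : ℤ → ℕ)
    (hX : Filter.Tendsto (fun N : ℕ => ∑ i ∈ Finset.range N, ((b : ℤ) - (X (-(i : ℤ)) : ℤ)))
      Filter.atTop Filter.atTop) (i : ℤ) :
    ∃ L ≤ i, ∀ j < L, fS b X j i < 0 := by
  set g : ℕ → ℤ := fun N => ∑ i ∈ Finset.range N, ((b : ℤ) - (X (-(i : ℤ)) : ℤ)) with hg
  set m : ℤ := min i 0 with hm
  set K : ℤ := fS b X m i - fS b X m 0 with hK
  obtain ⟨N₁, hN₁⟩ := Filter.eventually_atTop.mp (Filter.tendsto_atTop.mp hX (K + 1))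
  refine ⟨min (-(N₁ : ℤ)) m, by omega, ?_⟩
  intro j hj
  have hjm : j ≤ m := by omega
  have hj0 : j ≤ 0 := by omega
  have hmi : m ≤ i := by omega
  have hm0 : m ≤ 0 := by omega
  have e1 : fS b X j i = fS b X j m + fS b X m i := (fS_split b X hjm hmi).symm
  have e2 : fS b X j 0 = fS b X j m + fS b X m 0 := (fS_split b X hjm hm0).symm
  set n : ℕ := (-j).toNat with hn
  have hnj : (-(n : ℤ)) = j := by omega
  have e3 : fS b X j 0 = -g n := by rw [← hnj]; exact fS_prefix b X n
  have hnN : N₁ ≤ n := by omega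
  have := hN₁ n hnN
  -- fS b X j i = fS b X j 0 - fS b X m 0 + fS b X m i = -g n + K
  have : fS b X j i = -g n + K := by rw [e1]; rw [e3] at e2; omega
  omega

private lemma fS_argmax (b : ℕ) (X : ℤ → ℕ)
    (hX : Filter.Tendsto (fun N : ℕ => ∑ i ∈ Finset.range N, ((b : ℤ) - (X (-(i : ℤ)) : ℤ)))
      Filter.atTop Filter.atTop) (i : ℤ) :
    ∃ j ≤ i, (∀ j' ≤ i, fS b X j' i ≤ fS b X j i) ∧ (∀ j' < j, fS b X j' i < fS b X j i) := by
  classical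
  obtain ⟨L, hLi, hL⟩ := fS_tail_neg b X hX i
  set s : Finset ℤ := Finset.Icc L i with hs
  have hsn : s.Nonempty := ⟨i, by simp [hs, Finset.mem_Icc, hLi]⟩
  obtain ⟨j₀, hj₀s, hj₀⟩ := Finset.exists_max_image s (fun j => fS b X j i) hsn
  set M : Finset ℤ := s.filter (fun j => ∀ j' ∈ s, fS b X j' i ≤ fS b X j i) with hM
  have hMn : M.Nonempty := ⟨j₀, by simp only [hM, Finset.mem_filter]; exact ⟨hj₀s, hj₀⟩⟩
  set j : ℤ := M.min' hMn with hj
  have hjM : j ∈ M := Finset.min'_mem M hMn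
  obtain ⟨hjs, hjmax⟩ := Finset.mem_filter.mp hjM
  have hji : j ≤ i := (Finset.mem_Icc.mp hjs).2
  have hLj : L ≤ j := (Finset.mem_Icc.mp hjs).1
  have hj0le : 0 ≤ fS b X j i := by
    have := hjmax i (by simp [hs, Finset.mem_Icc, hLi])
    rwa [fS_self] at this
  refine ⟨j, hji, ?_, ?_⟩
  · intro j' hj'
    by_cases h : j' < L
    · exact le_of_lt (lt_of_lt_of_le (hL j' h) hj0le)
    · exact hjmax j' (Finset.mem_Icc.mpr ⟨not_lt.mp h, hj'⟩)
  · intro j' hj'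
    by_cases h : j' < L
    · exact lt_of_lt_of_le (hL j' h) hj0le
    · have hj's : j' ∈ s := Finset.mem_Icc.mpr ⟨not_lt.mp h, le_trans (le_of_lt hj') hji⟩
      have hj'M : j' ∉ M := fun hmem => absurd (Finset.min'_le M j' hmem) (by omega)
      have : ¬ (∀ j'' ∈ s, fS b X j'' i ≤ fS b X j' i) := by
        intro hall
        exact hj'M (Finset.mem_filter.mpr ⟨hj's, hall⟩)
      push_neg at this
      obtain ⟨j'', hj''s, hlt⟩ := this
      exact lt_of_lt_of_le hlt (hjmax j'' hj''s)

private lemma supQ_eq (b : ℕ) (X : ℤ → ℕ) {i j : ℤ} (hj : j ≤ i)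
    (hmax : ∀ j' ≤ i, fS b X j' i ≤ fS b X j i) :
    sol2Q b X i = fS b X j i := by
  unfold sol2Q
  apply le_antisymm
  · refine csSup_le ⟨fS b X i i, i, le_refl i, rfl⟩ ?_
    rintro x ⟨j', hj', rfl⟩
    exact hmax j' hj'
  · refine le_csSup ⟨fS b X j i, ?_⟩ ⟨j, hj, rfl⟩
    rintro x ⟨j', hj', rfl⟩
    exact hmax j' hj'

private lemma supH_eq (b : ℕ) (X : ℤ → ℕ) {i j : ℤ} (hj : j < i)
    (hmax : ∀ j' < i, fS b X j' i ≤ fS b X j i) :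
    sol2H b X i = (b : ℤ) + fS b X j i := by
  unfold sol2H
  congr 1
  apply le_antisymm
  · refine csSup_le ⟨fS b X (i - 1) i, i - 1, by omega, rfl⟩ ?_
    rintro x ⟨j', hj', rfl⟩
    exact hmax j' hj'
  · refine le_csSup ⟨fS b X j i, ?_⟩ ⟨j, hj, rfl⟩
    rintro x ⟨j', hj', rfl⟩
    exact hmax j' hj'

private lemma sol2Q_spec (b : ℕ) (X : ℤ → ℕ)
    (hX : Filter.Tendsto (fun N : ℕ => ∑ i ∈ Finset.range N, ((b : ℤ) - (X (-(i : ℤ)) : ℤ)))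
      Filter.atTop Filter.atTop) (i : ℤ) :
    ∃ j ≤ i, (∀ j' ≤ i, fS b X j' i ≤ fS b X j i) ∧ sol2Q b X i = fS b X j i := by
  obtain ⟨j, hj, hmax, -⟩ := fS_argmax b X hX i
  exact ⟨j, hj, hmax, supQ_eq b X hj hmax⟩

private lemma sol2H_spec (b : ℕ) (X : ℤ → ℕ)
    (hX : Filter.Tendsto (fun N : ℕ => ∑ i ∈ Finset.range N, ((b : ℤ) - (X (-(i : ℤ)) : ℤ)))
      Filter.atTop Filter.atTop) (i : ℤ) :
    ∃ j < i, (∀ j' < i, fS b X j' i ≤ fS b X j i) ∧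
      sol2H b X i = (b : ℤ) + fS b X j i := by
  obtain ⟨j, hj, hmax, -⟩ := fS_argmax b X hX (i - 1)
  have hji : j < i := by omega
  have hmax' : ∀ j' < i, fS b X j' i ≤ fS b X j i := by
    intro j' hj'
    have hj'le : j' ≤ i - 1 := by omega
    have e1 : fS b X j' i = fS b X j' (i - 1) + fS b X (i - 1) i :=
      (fS_split b X hj'le (by omega)).symm
    have e2 : fS b X j i = fS b X j (i - 1) + fS b X (i - 1) i :=
      (fS_split b X hj (by omega)).symm
    have := hmax j' hj'le
    omega
  exact ⟨j, hji, hmax', supH_eq b X hji hmax'⟩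

private lemma sol2Q_nonneg (b : ℕ) (X : ℤ → ℕ)
    (hX : Filter.Tendsto (fun N : ℕ => ∑ i ∈ Finset.range N, ((b : ℤ) - (X (-(i : ℤ)) : ℤ)))
      Filter.atTop Filter.atTop) (i : ℤ) : 0 ≤ sol2Q b X i := by
  obtain ⟨j, hj, hmax, heq⟩ := sol2Q_spec b X hX i
  have := hmax i le_rfl
  rw [fS_self] at this
  omega

private lemma sol2H_add (b : ℕ) (X : ℤ → ℕ)
    (hX : Filter.Tendsto (fun N : ℕ => ∑ i ∈ Finset.range N, ((b : ℤ) - (X (-(i : ℤ)) : ℤ)))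
      Filter.atTop Filter.atTop) (i : ℤ) :
    sol2H b X i = (X i : ℤ) + sol2Q b X (i - 1) := by
  obtain ⟨j, hj, hmax, heq⟩ := sol2H_spec b X hX i
  have hji1 : j ≤ i - 1 := by omega
  have hmaxQ : ∀ j' ≤ i - 1, fS b X j' (i - 1) ≤ fS b X j (i - 1) := by
    intro j' hj'
    have e1 : fS b X j' i = fS b X j' (i - 1) + fS b X (i - 1) i :=
      (fS_split b X hj' (by omega)).symm
    have e2 : fS b X j i = fS b X j (i - 1) + fS b X (i - 1) i :=
      (fS_split b X hji1 (by omega)).symm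
    have := hmax j' (by omega)
    omega
  have hQ : sol2Q b X (i - 1) = fS b X j (i - 1) := supQ_eq b X hji1 hmaxQ
  have e2 : fS b X j i = fS b X j (i - 1) + fS b X (i - 1) i :=
    (fS_split b X hji1 (by omega)).symm
  have hs := fS_single b X i
  omega

private lemma sol2Q_max (b : ℕ) (X : ℤ → ℕ)
    (hX : Filter.Tendsto (fun N : ℕ => ∑ i ∈ Finset.range N, ((b : ℤ) - (X (-(i : ℤ)) : ℤ)))
      Filter.atTop Filter.atTop) (i : ℤ) :
    sol2Q b X i = max (sol2H b X i - (b : ℤ)) 0 := by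
  obtain ⟨jH, hjH, hmaxH, heqH⟩ := sol2H_spec b X hX i
  obtain ⟨jQ, hjQ, hmaxQ, heqQ⟩ := sol2Q_spec b X hX i
  have h0 : 0 ≤ fS b X jQ i := by
    have := hmaxQ i le_rfl; rw [fS_self] at this; omega
  have hge : fS b X jH i ≤ fS b X jQ i := hmaxQ jH (le_of_lt hjH)
  have hle : fS b X jQ i ≤ max (fS b X jH i) 0 := by
    rcases eq_or_lt_of_le hjQ with h | h
    · subst h; rw [fS_self]; exact le_max_right _ _
    · exact le_trans (hmaxH jQ h) (le_max_left _ _)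
  rw [heqQ, heqH]
  omega

private lemma sol_lower (b : ℕ) (X : ℤ → ℕ) (H Q : ℤ → ℤ)
    (hsol : ∀ i : ℤ, H i = (X i : ℤ) + Q (i - 1) ∧ Q i = max (H i - (b : ℤ)) 0) :
    ∀ (n : ℕ) (i : ℤ), Q (i - n) + fS b X (i - n) i ≤ Q i := by
  intro n
  induction n with
  | zero => intro i; simp [fS_self]
  | succ n ih =>
    intro i
    have h1 : Q (i - 1) + ((X i : ℤ) - b) ≤ Q i := by
      obtain ⟨hH, hQ⟩ := hsol i
      omega
    have h2 := ih (i - 1)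
    have hcast : i - ((n + 1 : ℕ) : ℤ) = (i - 1) - (n : ℤ) := by push_cast; ring
    have e : fS b X ((i - 1) - n) (i - 1) + fS b X (i - 1) i = fS b X ((i - 1) - n) i :=
      fS_split b X (by omega) (by omega)
    have hs := fS_single b X i
    rw [hcast]
    have e2 : fS b X ((i-1) - n) i = fS b X ((i-1) - n) (i - 1) + ((X i : ℤ) - b) := by omega
    omega

end Stmt2Aux
/-- two-sided equations: existence, minimality and uniqueness. -/
theorem stmt_2 (b : ℕ) (hb : 1 ≤ b) (X : ℤ → ℕ)
    (hX : Filter.Tendsto (fun N : ℕ => ∑ i ∈ Finset.range N, ((b : ℤ) - (X (-(i : ℤ)) : ℤ)))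
      Filter.atTop Filter.atTop) :
    -- the suprema are attained
    (∀ i : ℤ, ∃ j < i, (∀ j' < i,
        (∑ k ∈ Finset.Ioc j' i, ((X k : ℤ) - (b : ℤ))) ≤
          ∑ k ∈ Finset.Ioc j i, ((X k : ℤ) - (b : ℤ))) ∧
        sol2H b X i = (b : ℤ) + ∑ k ∈ Finset.Ioc j i, ((X k : ℤ) - (b : ℤ))) ∧
    (∀ i : ℤ, ∃ j ≤ i, (∀ j' ≤ i,
        (∑ k ∈ Finset.Ioc j' i, ((X k : ℤ) - (b : ℤ))) ≤
          ∑ k ∈ Finset.Ioc j i, ((X k : ℤ) - (b : ℤ))) ∧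
        sol2Q b X i = ∑ k ∈ Finset.Ioc j i, ((X k : ℤ) - (b : ℤ))) ∧
    -- they solve the equations
    (∀ i : ℤ, sol2H b X i = (X i : ℤ) + sol2Q b X (i - 1) ∧
        sol2Q b X i = max (sol2H b X i - (b : ℤ)) 0) ∧
    -- minimality among all solutions
    (∀ H Q : ℤ → ℤ,
      (∀ i : ℤ, H i = (X i : ℤ) + Q (i - 1) ∧ Q i = max (H i - (b : ℤ)) 0) →
      ∀ i : ℤ, sol2H b X i ≤ H i ∧ sol2Q b X i ≤ Q i) ∧
    -- for every `i` there is `i₀ < i` with `H_{i₀} < b`, hence `Q_{i₀} = 0`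
    (∀ i : ℤ, ∃ i₀ < i, sol2H b X i₀ < (b : ℤ) ∧ sol2Q b X i₀ = 0) ∧
    -- uniqueness among the solutions with `Q_{i₀} = 0` for some `i₀ < i`, for each `i`
    (∀ H Q : ℤ → ℤ,
      (∀ i : ℤ, H i = (X i : ℤ) + Q (i - 1) ∧ Q i = max (H i - (b : ℤ)) 0) →
      (∀ i : ℤ, ∃ i₀ < i, Q i₀ = 0) →
      H = sol2H b X ∧ Q = sol2Q b X) := by
  have key : ∀ H Q : ℤ → ℤ,
      (∀ i : ℤ, H i = (X i : ℤ) + Q (i - 1) ∧ Q i = max (H i - (b : ℤ)) 0) →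
      ∀ i : ℤ, sol2Q b X i ≤ Q i := by
    intro H Q hsol i
    obtain ⟨j, hj, hmax, heq⟩ := sol2Q_spec b X hX i
    have hn : i - ((i - j).toNat : ℤ) = j := by omega
    have h1 := sol_lower b X H Q hsol (i - j).toNat i
    rw [hn] at h1
    have hQj : 0 ≤ Q j := by rw [(hsol j).2]; exact le_max_right _ _
    omega
  refine ⟨?_, ?_, ?_, ?_, ?_, ?_⟩
  · intro i
    obtain ⟨j, hj, hmax, heq⟩ := sol2H_spec b X hX i
    exact ⟨j, hj, hmax, heq⟩
  · intro i
    obtain ⟨j, hj, hmax, heq⟩ := sol2Q_spec b X hX i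
    exact ⟨j, hj, hmax, heq⟩
  · intro i
    exact ⟨sol2H_add b X hX i, sol2Q_max b X hX i⟩
  · intro H Q hsol i
    refine ⟨?_, key H Q hsol i⟩
    have h1 := key H Q hsol (i - 1)
    have h2 := sol2H_add b X hX i
    have h3 := (hsol i).1
    omega
  · intro i
    obtain ⟨j, hj, hmax, hstrict⟩ := fS_argmax b X hX (i - 1)
    have hHlt : sol2H b X j < (b : ℤ) := by
      obtain ⟨j₁, hj₁, hmax₁, heq₁⟩ := sol2H_spec b X hX j
      have e : fS b X j₁ (i - 1) = fS b X j₁ j + fS b X j (i - 1) :=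
        (fS_split b X (le_of_lt hj₁) hj).symm
      have hs := hstrict j₁ hj₁
      omega
    refine ⟨j, by omega, hHlt, ?_⟩
    rw [sol2Q_max b X hX j]
    omega
  · intro H Q hsol hQ0
    have hQge : ∀ i, Q i ≤ sol2Q b X i := by
      intro i
      obtain ⟨i₀, hi₀, h0⟩ := hQ0 i
      have hstep : ∀ n : ℕ, Q (i₀ + n) ≤ sol2Q b X (i₀ + n) := by
        intro n
        induction n with
        | zero => simpa [h0] using sol2Q_nonneg b X hX i₀
        | succ n ih =>
          set m : ℤ := i₀ + ((n + 1 : ℕ) : ℤ) with hm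
          have hi : m - 1 = i₀ + (n : ℕ) := by omega
          have h1 := (hsol m).2
          have h2 := (hsol m).1
          rw [hi] at h2
          have h3 := sol2Q_max b X hX m
          have h4 := sol2H_add b X hX m
          rw [hi] at h4
          omega
      have hn : i₀ + ((i - i₀).toNat : ℤ) = i := by omega
      have := hstep (i - i₀).toNat
      rwa [hn] at this
    have hQeq : Q = sol2Q b X := funext fun i => le_antisymm (hQge i) (key H Q hsol i)
    refine ⟨funext fun i => ?_, hQeq⟩
    rw [(hsol i).1, sol2H_add b X hX i, hQeq]
end

section
/- Let b ≥ 1 and α₁ < 1. Then there exist constants C < ∞ and c > 0 such that for all m ≥ 1, all n with n/(bm) ≤ α₁, and all i, in the exact model E[e^{c H_{m,n;i}}] ≤ C and E[e^{c Q_{m,n;i}}] ≤ C. -/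
open MeasureTheory ProbabilityTheory Filter Finset Complex

section auxlemmas
open Finset


lemma Xex_eq (m n : ℕ) [NeZero m] (h : Fin n → ZMod m) (k : ℤ) :
    Xex m n h k = (Finset.univ.filter fun key => h key = (k : ZMod m)).card := by
  rw [Xex, Nat.card_eq_fintype_card, Fintype.card_subtype]

lemma castInjOn (m : ℕ) [NeZero m] (j i : ℤ) (hlen : i - j ≤ (m:ℤ)) :
    Set.InjOn (fun k : ℤ => (k : ZMod m)) (Finset.Ioc j i) := by
  intro a ha b hb hab
  simp only [Finset.coe_Ioc, Set.mem_Ioc] at ha hb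
  have hmod := (ZMod.intCast_eq_intCast_iff a b m).mp hab
  have hdvd : (m:ℤ) ∣ b - a := hmod.dvd
  have hz : b - a = 0 := Int.eq_zero_of_abs_lt_dvd hdvd (by
    have hm : (0:ℤ) < m := by exact_mod_cast Nat.pos_of_ne_zero (NeZero.ne m)
    rw [abs_lt]; omega)
  omega

lemma window_sum (m n : ℕ) [NeZero m] (h : Fin n → ZMod m) (j i : ℤ) (hji : j ≤ i)
    (hlen : i - j ≤ (m:ℤ)) :
    ∑ k ∈ Finset.Ioc j i, (Xex m n h k : ℤ)
      = ((Finset.univ.filter fun key =>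
          h key ∈ (Finset.Ioc j i).image (fun k : ℤ => (k : ZMod m))).card : ℤ) := by
  classical
  set W := (Finset.Ioc j i).image (fun k : ℤ => (k : ZMod m)) with hW
  have hinj := castInjOn m j i hlen
  have h1 : ∑ k ∈ Finset.Ioc j i, (Xex m n h k : ℤ)
      = ∑ v ∈ W, ((Finset.univ.filter fun key => h key = v).card : ℤ) := by
    rw [hW, Finset.sum_image (fun x hx y hy hxy => hinj hx hy hxy)]
    exact Finset.sum_congr rfl fun k _ => by rw [Xex_eq]
  rw [h1]
  have h2 : (Finset.univ.filter fun key => h key ∈ W).card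
      = ∑ v ∈ W, ((Finset.univ.filter fun key => h key ∈ W).filter
          (fun key => h key = v)).card := by
    exact Finset.card_eq_sum_card_fiberwise (fun x hx => (Finset.mem_filter.mp hx).2)
  rw [h2]
  push_cast
  refine Finset.sum_congr rfl fun v hv => ?_
  have h3 : (Finset.univ.filter fun key => h key ∈ W).filter (fun key => h key = v)
      = Finset.univ.filter (fun key => h key = v) := by
    ext key
    simp only [Finset.mem_filter, Finset.mem_univ, true_and]
    constructor
    · rintro ⟨_, h2⟩; exact h2
    · intro h2; exact ⟨h2 ▸ hv, h2⟩
  rw [h3]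

lemma image_Ioc_card (m : ℕ) [NeZero m] (j i : ℤ) (hji : j ≤ i) (hlen : i - j ≤ (m:ℤ)) :
    ((Finset.Ioc j i).image (fun k : ℤ => (k : ZMod m))).card = (i - j).toNat := by
  rw [Finset.card_image_of_injOn (castInjOn m j i hlen), Int.card_Ioc]

lemma period_sum (m n : ℕ) [NeZero m] (h : Fin n → ZMod m) (j : ℤ) :
    ∑ k ∈ Finset.Ioc j (j + m), (Xex m n h k : ℤ) = n := by
  classical
  have hm : 0 < m := Nat.pos_of_ne_zero (NeZero.ne m)
  have hji : j ≤ j + m := by omega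
  have hlen : j + (m:ℤ) - j ≤ (m:ℤ) := by omega
  rw [window_sum m n h j (j+m) hji hlen]
  have hW : (Finset.Ioc j (j+(m:ℤ))).image (fun k : ℤ => (k : ZMod m)) = Finset.univ := by
    apply Finset.eq_univ_of_card
    rw [image_Ioc_card m j (j+m) hji hlen, ZMod.card]
    omega
  rw [hW]
  simp

lemma chernoff (m n : ℕ) [NeZero m] (c : ℝ) (W : Finset (ZMod m)) :
    ∑ h : Fin n → ZMod m, Real.exp (c * ((Finset.univ.filter fun key => h key ∈ W).card : ℝ))
      = (((m:ℝ) - W.card) + W.card * Real.exp c) ^ n := by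
  classical
  have hsum : ∀ h : Fin n → ZMod m,
      Real.exp (c * ((Finset.univ.filter fun key => h key ∈ W).card : ℝ))
        = ∏ key : Fin n, (fun v : ZMod m => if v ∈ W then Real.exp c else 1) (h key) := by
    intro h
    rw [Finset.card_filter]
    push_cast
    rw [Finset.mul_sum, Real.exp_sum]
    refine Finset.prod_congr rfl fun key _ => ?_
    by_cases hk : h key ∈ W <;> simp [hk]
  simp only [hsum]
  have key : ∑ h : Fin n → ZMod m, ∏ i : Fin n,
        (fun v : ZMod m => if v ∈ W then Real.exp c else 1) (h i)
      = (∑ v : ZMod m, if v ∈ W then Real.exp c else 1) ^ n := by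
    have hpow : (∑ v : ZMod m, if v ∈ W then Real.exp c else 1) ^ n
        = ∏ _i : Fin n, (∑ v : ZMod m, if v ∈ W then Real.exp c else 1) := by
      simp [Finset.prod_const]
    rw [hpow, Finset.prod_univ_sum, Fintype.piFinset_univ]
  rw [key]
  congr 1
  rw [Finset.sum_ite, Finset.sum_const, Finset.sum_const]
  have h1 : Finset.univ.filter (fun v : ZMod m => v ∈ W) = W := by
    ext v; simp
  have h2 : (Finset.univ.filter (fun v : ZMod m => ¬ v ∈ W)).card = m - W.card := by
    have he : Finset.univ.filter (fun v : ZMod m => ¬ v ∈ W) = Finset.univ \ W := by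
      ext v; simp
    rw [he, Finset.card_sdiff_of_subset (Finset.subset_univ W), Finset.card_univ, ZMod.card]
  rw [h1, h2]
  have hWm : W.card ≤ m := by
    have := Finset.card_le_card (Finset.subset_univ W)
    simpa [ZMod.card] using this
  rw [nsmul_eq_mul, nsmul_eq_mul, mul_one, Nat.cast_sub hWm]
  ring

lemma sum_Ioc_consec (f : ℤ → ℤ) {a b c : ℤ} (h1 : a ≤ b) (h2 : b ≤ c) :
    ∑ k ∈ Finset.Ioc a b, f k + ∑ k ∈ Finset.Ioc b c, f k = ∑ k ∈ Finset.Ioc a c, f k := by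
  rw [← Finset.sum_union (by
    rw [Finset.disjoint_left]
    intro x hx hx'
    simp only [Finset.mem_Ioc] at hx hx'
    omega), Finset.Ioc_union_Ioc_eq_Ioc h1 h2]


lemma elem_le (b m n : ℕ) [NeZero m] (hn : (n:ℤ) ≤ (b:ℤ) * m) (h : Fin n → ZMod m) (i j : ℤ)
    (hji : j ≤ i) :
    ∑ k ∈ Finset.Ioc j i, ((Xex m n h k : ℤ) - b)
      ≤ (Finset.range m).sup' (Finset.nonempty_range_iff.mpr (NeZero.ne m))
          (fun t => (∑ k ∈ Finset.Ioc (i - t) i, (Xex m n h k : ℤ)) - b * t) := by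
  have hm : 0 < m := Nat.pos_of_ne_zero (NeZero.ne m)
  have direct : ∀ j' : ℤ, j' ≤ i → i - j' < m →
      ∑ k ∈ Finset.Ioc j' i, ((Xex m n h k : ℤ) - b)
        ≤ (Finset.range m).sup' (Finset.nonempty_range_iff.mpr (NeZero.ne m))
          (fun t => (∑ k ∈ Finset.Ioc (i - t) i, (Xex m n h k : ℤ)) - b * t) := by
    intro j' hj' hlt
    have ht : ((i - j').toNat : ℤ) = i - j' := Int.toNat_of_nonneg (by omega)
    have htm : (i - j').toNat ∈ Finset.range m := Finset.mem_range.mpr (by omega)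
    refine le_trans (le_of_eq ?_) (Finset.le_sup' _ htm)
    have hij : i - ((i - j').toNat : ℤ) = j' := by omega
    rw [hij, Finset.sum_sub_distrib, Finset.sum_const, Int.card_Ioc, nsmul_eq_mul]
    have h2 : ((i - j').toNat : ℤ) * b = b * ((i - j').toNat : ℤ) := by ring
    rw [h2]
  suffices H : ∀ d : ℕ, ∀ j' : ℤ, j' ≤ i → i - j' ≤ d →
      ∑ k ∈ Finset.Ioc j' i, ((Xex m n h k : ℤ) - b)
        ≤ (Finset.range m).sup' (Finset.nonempty_range_iff.mpr (NeZero.ne m))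
          (fun t => (∑ k ∈ Finset.Ioc (i - t) i, (Xex m n h k : ℤ)) - b * t) by
    exact H (i - j).toNat j hji (by omega)
  intro d
  induction d with
  | zero => exact fun j' hj' hd => direct j' hj' (by omega)
  | succ d ih =>
    intro j' hj' hd
    by_cases hlt : i - j' < m
    · exact direct j' hj' hlt
    · have h1 : j' + (m:ℤ) ≤ i := by omega
      rw [← sum_Ioc_consec (fun k => ((Xex m n h k : ℤ) - b))
        (show j' ≤ j' + (m:ℤ) by omega) h1]
      have hper : ∑ k ∈ Finset.Ioc j' (j' + (m:ℤ)), ((Xex m n h k : ℤ) - b)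
          = (n:ℤ) - b * m := by
        rw [Finset.sum_sub_distrib, period_sum, Finset.sum_const, Int.card_Ioc]
        have hmm : (j' + (m:ℤ) - j').toNat = m := by omega
        rw [hmm, nsmul_eq_mul]; ring
      have hle := ih (j' + m) h1 (by omega)
      rw [hper]
      linarith

lemma Qset_nonempty (b m n : ℕ) (h : Fin n → ZMod m) (i : ℤ) :
    (0:ℤ) ∈ {x : ℤ | ∃ j ≤ i, x = ∑ k ∈ Finset.Ioc j i, ((Xex m n h k : ℤ) - (b : ℤ))} :=
  ⟨i, le_rfl, by simp⟩

lemma Qset_bddAbove (b m n : ℕ) [NeZero m] (hn : (n:ℤ) ≤ (b:ℤ) * m) (h : Fin n → ZMod m)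
    (i : ℤ) :
    BddAbove {x : ℤ | ∃ j ≤ i, x = ∑ k ∈ Finset.Ioc j i, ((Xex m n h k : ℤ) - (b : ℤ))} := by
  refine ⟨(Finset.range m).sup' (Finset.nonempty_range_iff.mpr (NeZero.ne m))
    (fun t => (∑ k ∈ Finset.Ioc (i - t) i, (Xex m n h k : ℤ)) - b * t), ?_⟩
  rintro x ⟨j, hj, rfl⟩
  exact elem_le b m n hn h i j hj

lemma Qex_nonneg (b m n : ℕ) [NeZero m] (hn : (n:ℤ) ≤ (b:ℤ) * m) (h : Fin n → ZMod m)
    (i : ℤ) : 0 ≤ Qex b m n h i :=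
  le_csSup (Qset_bddAbove b m n hn h i) (Qset_nonempty b m n h i)

lemma Qex_le_sup (b m n : ℕ) [NeZero m] (hn : (n:ℤ) ≤ (b:ℤ) * m) (h : Fin n → ZMod m)
    (i : ℤ) : Qex b m n h i
      ≤ (Finset.range m).sup' (Finset.nonempty_range_iff.mpr (NeZero.ne m))
          (fun t => (∑ k ∈ Finset.Ioc (i - t) i, (Xex m n h k : ℤ)) - b * t) := by
  refine csSup_le ⟨0, Qset_nonempty b m n h i⟩ ?_
  rintro x ⟨j, hj, rfl⟩
  exact elem_le b m n hn h i j hj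

lemma window_le_n (m n : ℕ) [NeZero m] (h : Fin n → ZMod m) (i : ℤ) (t : ℕ) (ht : t ≤ m) :
    ∑ k ∈ Finset.Ioc (i - t) i, (Xex m n h k : ℤ) ≤ n := by
  rw [window_sum m n h (i - t) i (by omega) (by omega)]
  have := Finset.card_le_card (Finset.subset_univ
    (Finset.univ.filter fun key =>
      h key ∈ (Finset.Ioc (i - (t:ℤ)) i).image (fun k : ℤ => (k : ZMod m))))
  simp only [Finset.card_univ, Fintype.card_fin] at this
  exact_mod_cast this

lemma sup_le_n (b m n : ℕ) [NeZero m] (h : Fin n → ZMod m) (i : ℤ) :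
    (Finset.range m).sup' (Finset.nonempty_range_iff.mpr (NeZero.ne m))
        (fun t => (∑ k ∈ Finset.Ioc (i - t) i, (Xex m n h k : ℤ)) - b * t) ≤ n := by
  refine Finset.sup'_le _ _ fun t htm => ?_
  have h1 := window_le_n m n h i t (le_of_lt (Finset.mem_range.mp htm))
  have h2 : (0:ℤ) ≤ b * t := by positivity
  omega

lemma Qex_le_n (b m n : ℕ) [NeZero m] (hn : (n:ℤ) ≤ (b:ℤ) * m) (h : Fin n → ZMod m)
    (i : ℤ) : Qex b m n h i ≤ n :=
  le_trans (Qex_le_sup b m n hn h i) (sup_le_n b m n h i)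

lemma Qex_rec (b m n : ℕ) [NeZero m] (hn : (n:ℤ) ≤ (b:ℤ) * m) (h : Fin n → ZMod m) (i : ℤ) :
    Qex b m n h (i - 1) + (Xex m n h i : ℤ) - b ≤ Qex b m n h i := by
  have key : ∀ x ∈ {x : ℤ | ∃ j ≤ i - 1, x = ∑ k ∈ Finset.Ioc j (i-1),
      ((Xex m n h k : ℤ) - (b : ℤ))}, x ≤ Qex b m n h i - ((Xex m n h i : ℤ) - b) := by
    rintro x ⟨j, hj, rfl⟩
    have hmem : (∑ k ∈ Finset.Ioc j (i-1), ((Xex m n h k : ℤ) - (b:ℤ))) + ((Xex m n h i : ℤ) - b)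
        ∈ {x : ℤ | ∃ j ≤ i, x = ∑ k ∈ Finset.Ioc j i, ((Xex m n h k : ℤ) - (b : ℤ))} := by
      refine ⟨j, by omega, ?_⟩
      have hIoc : Finset.Ioc (i-1) i = {i} := by
        ext k; simp only [Finset.mem_Ioc, Finset.mem_singleton]; omega
      rw [← sum_Ioc_consec (fun k => ((Xex m n h k : ℤ) - b)) hj (by omega : i - 1 ≤ i),
        hIoc, Finset.sum_singleton]
    have h4 : (∑ k ∈ Finset.Ioc j (i-1), ((Xex m n h k : ℤ) - (b:ℤ))) + ((Xex m n h i : ℤ) - b)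
        ≤ Qex b m n h i := by
      rw [Qex]; exact le_csSup (Qset_bddAbove b m n hn h i) hmem
    omega
  have := csSup_le ⟨0, Qset_nonempty b m n h (i-1)⟩ key
  have h2 : Qex b m n h (i-1) ≤ Qex b m n h i - ((Xex m n h i : ℤ) - b) := this
  omega

lemma Hex_le (b m n : ℕ) [NeZero m] (hn : (n:ℤ) ≤ (b:ℤ) * m) (h : Fin n → ZMod m) (i : ℤ) :
    Hex b m n h i ≤ Qex b m n h i + b := by
  have := Qex_rec b m n hn h i
  rw [Hex]; omega

lemma Hex_nonneg (b m n : ℕ) [NeZero m] (hn : (n:ℤ) ≤ (b:ℤ) * m) (h : Fin n → ZMod m) (i : ℤ) :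
    0 ≤ Hex b m n h i := by
  have h1 := Qex_nonneg b m n hn h (i - 1)
  have h2 : (0:ℤ) ≤ (Xex m n h i : ℤ) := Int.ofNat_nonneg _
  rw [Hex]; omega

lemma tsum_conv (m n N : ℕ) [NeZero m] (c : ℝ) (G : (Fin n → ZMod m) → ℤ)
    (h0 : ∀ h, 0 ≤ G h) (hN : ∀ h, G h ≤ (N:ℤ)) :
    ∑' k : ℕ, Real.exp (c * k) *
        ((Nat.card {h : Fin n → ZMod m // G h = (k:ℤ)} : ℝ) / (m:ℝ)^n)
      = (∑ h : Fin n → ZMod m, Real.exp (c * (G h : ℝ))) / (m:ℝ)^n := by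
  classical
  have hcard : ∀ k : ℕ, (Nat.card {h : Fin n → ZMod m // G h = (k:ℤ)} : ℝ)
      = ((Finset.univ.filter fun h => G h = (k:ℤ)).card : ℝ) := by
    intro k; rw [Nat.card_eq_fintype_card, Fintype.card_subtype]
  have hzero : ∀ k ∉ Finset.range (N+1), Real.exp (c * k) *
      ((Nat.card {h : Fin n → ZMod m // G h = (k:ℤ)} : ℝ) / (m:ℝ)^n) = 0 := by
    intro k hk
    have hk' : N + 1 ≤ k := by
      by_contra hc
      exact hk (Finset.mem_range.mpr (by omega))
    have hemp : (Finset.univ.filter fun h : Fin n → ZMod m => G h = (k:ℤ)) = ∅ := by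
      rw [Finset.filter_eq_empty_iff]
      intro h _
      intro he
      have h1 := hN h
      rw [he] at h1
      have : (k:ℤ) ≤ N := h1
      exact_mod_cast absurd (by exact_mod_cast this : k ≤ N) (by omega)
    rw [hcard, hemp]
    simp
  rw [tsum_eq_sum hzero]
  have hterm : ∀ k ∈ Finset.range (N+1),
      Real.exp (c * k) * ((Nat.card {h : Fin n → ZMod m // G h = (k:ℤ)} : ℝ) / (m:ℝ)^n)
        = (∑ h ∈ Finset.univ.filter (fun h => (G h).toNat = k),
            Real.exp (c * (G h : ℝ))) / (m:ℝ)^n := by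
    intro k _
    rw [hcard]
    have hfib : (Finset.univ.filter fun h : Fin n → ZMod m => G h = (k:ℤ))
        = (Finset.univ.filter fun h => (G h).toNat = k) := by
      ext h
      simp only [Finset.mem_filter, Finset.mem_univ, true_and]
      have := h0 h
      constructor <;> intro hx <;> omega
    have hconst : ∀ h ∈ Finset.univ.filter (fun h : Fin n → ZMod m => (G h).toNat = k),
        Real.exp (c * (G h : ℝ)) = Real.exp (c * k) := by
      intro h hh
      have h1 := (Finset.mem_filter.mp hh).2
      have h2 := h0 h
      have h3 : G h = (k:ℤ) := by omega
      rw [h3]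
      norm_num
    rw [Finset.sum_congr rfl hconst, Finset.sum_const, nsmul_eq_mul, hfib]
    ring
  rw [Finset.sum_congr rfl hterm, ← Finset.sum_div]
  congr 1
  exact Finset.sum_fiberwise_of_maps_to (fun h _ => Finset.mem_range.mpr (by
    have := h0 h; have := hN h; omega)) _

lemma exp_window_bound (b m n t : ℕ) [NeZero m] (c β δ : ℝ) (hc0 : 0 < c)
    (hδ0 : 0 ≤ δ) (hb1 : 1 ≤ (b:ℝ)) (hn : (n:ℝ) ≤ β * ((b:ℝ)*(m:ℝ))) (hβ0 : 0 ≤ β)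
    (hkey : β * (Real.exp c - 1) - c ≤ -δ) (htm : t < m) :
    Real.exp (-(c * b * t)) * ((((m:ℝ) - t) + t * Real.exp c) ^ n / (m:ℝ)^n)
      ≤ Real.exp (-δ * t) := by
  have hmpos : (0:ℝ) < m := by
    exact_mod_cast Nat.pos_of_ne_zero (NeZero.ne m)
  have htr : (t:ℝ) < m := by exact_mod_cast htm
  have ht0 : (0:ℝ) ≤ t := Nat.cast_nonneg t
  have hec1 : (0:ℝ) ≤ Real.exp c - 1 := by
    have := Real.one_le_exp hc0.le
    linarith
  set x : ℝ := (t:ℝ) * (Real.exp c - 1) / m with hx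
  have hx0 : 0 ≤ x := by positivity
  have hbase : (((m:ℝ) - t) + t * Real.exp c) / m = 1 + x := by
    rw [div_eq_iff hmpos.ne', hx, add_mul, one_mul, div_mul_cancel₀ _ hmpos.ne']
    ring
  have hbase0 : (0:ℝ) ≤ (((m:ℝ) - t) + t * Real.exp c) := by nlinarith
  have h1 : (((m:ℝ) - t) + t * Real.exp c) ^ n / (m:ℝ)^n = (1 + x) ^ n := by
    rw [← div_pow, hbase]
  rw [h1]
  have h2 : (1 + x) ^ n ≤ Real.exp ((n:ℝ) * x) := by
    calc (1 + x)^n ≤ (Real.exp x)^n := by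
          apply pow_le_pow_left₀ (by linarith) (by linarith [Real.add_one_le_exp x])
      _ = Real.exp ((n:ℝ) * x) := by rw [← Real.exp_nat_mul]
  calc Real.exp (-(c * b * t)) * (1 + x)^n
      ≤ Real.exp (-(c * b * t)) * Real.exp ((n:ℝ) * x) := by
        apply mul_le_mul_of_nonneg_left h2 (Real.exp_pos _).le
    _ = Real.exp ((n:ℝ) * x - c * b * t) := by rw [← Real.exp_add]; ring_nf
    _ ≤ Real.exp (-δ * t) := by
        apply Real.exp_le_exp.mpr
        have hxeq : (n:ℝ) * x = (n:ℝ) * (t:ℝ) * (Real.exp c - 1) / m := by rw [hx]; ring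
        have hnx : (n:ℝ) * x ≤ β * (b:ℝ) * t * (Real.exp c - 1) := by
          rw [hxeq, div_le_iff₀ hmpos]
          nlinarith [mul_le_mul_of_nonneg_right hn (mul_nonneg ht0 hec1)]
        have hbt0 : (0:ℝ) ≤ (b:ℝ) * t := by positivity
        have hstep := mul_le_mul_of_nonneg_right hkey hbt0
        have htbt : (t:ℝ) ≤ (b:ℝ) * t := by nlinarith [mul_le_mul_of_nonneg_right hb1 ht0]
        have hdt : δ * t ≤ δ * ((b:ℝ) * t) := mul_le_mul_of_nonneg_left htbt hδ0
        nlinarith [hnx, hstep, hdt]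

lemma Q_exp_bound (b m n : ℕ) [NeZero m] (c β δ : ℝ) (hc0 : 0 < c) (hδ0 : 0 < δ)
    (hb1 : 1 ≤ (b:ℝ)) (hn : (n:ℝ) ≤ β * ((b:ℝ)*(m:ℝ))) (hβ0 : 0 ≤ β)
    (hkey : β * (Real.exp c - 1) - c ≤ -δ) (hnbm : (n:ℤ) ≤ (b:ℤ) * m) (i : ℤ) :
    (∑ h : Fin n → ZMod m, Real.exp (c * (Qex b m n h i : ℝ))) / (m:ℝ)^n
      ≤ (1 - Real.exp (-δ))⁻¹ := by
  classical
  have hmpos : (0:ℝ) < m := by exact_mod_cast Nat.pos_of_ne_zero (NeZero.ne m)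
  have hmn : (0:ℝ) < (m:ℝ)^n := by positivity
  -- pointwise: exp (c Q) ≤ ∑_t exp (c * (S_t - b t))
  have step1 : ∀ h : Fin n → ZMod m, Real.exp (c * (Qex b m n h i : ℝ))
      ≤ ∑ t ∈ Finset.range m, Real.exp (c *
          (((∑ k ∈ Finset.Ioc (i - t) i, (Xex m n h k : ℤ)) - b * t : ℤ) : ℝ)) := by
    intro h
    obtain ⟨t₀, ht₀, hsup⟩ := Finset.exists_mem_eq_sup'
      (Finset.nonempty_range_iff.mpr (NeZero.ne m))
      (fun t => (∑ k ∈ Finset.Ioc (i - t) i, (Xex m n h k : ℤ)) - b * t)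
    have hle : Qex b m n h i
        ≤ (∑ k ∈ Finset.Ioc (i - t₀) i, (Xex m n h k : ℤ)) - b * t₀ := by
      rw [← hsup]; exact Qex_le_sup b m n hnbm h i
    calc Real.exp (c * (Qex b m n h i : ℝ))
        ≤ Real.exp (c * (((∑ k ∈ Finset.Ioc (i - t₀) i, (Xex m n h k : ℤ)) - b * t₀ : ℤ) : ℝ)) := by
          apply Real.exp_le_exp.mpr
          apply mul_le_mul_of_nonneg_left _ hc0.le
          exact_mod_cast hle
      _ ≤ _ := Finset.single_le_sum (f := fun t : ℕ => Real.exp (c *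
            (((∑ k ∈ Finset.Ioc (i - t) i, (Xex m n h k : ℤ)) - b * t : ℤ) : ℝ)))
            (fun t _ => (Real.exp_pos _).le) ht₀
  -- per-window identity
  have step2 : ∀ t ∈ Finset.range m, ∑ h : Fin n → ZMod m, Real.exp (c *
        (((∑ k ∈ Finset.Ioc (i - t) i, (Xex m n h k : ℤ)) - b * t : ℤ) : ℝ))
      = Real.exp (-(c * b * t)) * ((((m:ℝ) - t) + t * Real.exp c) ^ n) := by
    intro t htm
    have htlt : t < m := Finset.mem_range.mp htm
    set W := (Finset.Ioc (i - (t:ℤ)) i).image (fun k : ℤ => (k : ZMod m)) with hWdef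
    have hWcard : W.card = t := by
      rw [hWdef, image_Ioc_card m (i - t) i (by omega) (by
        have : (t:ℤ) ≤ m := by exact_mod_cast htlt.le
        omega)]
      omega
    have hws : ∀ h : Fin n → ZMod m, ∑ k ∈ Finset.Ioc (i - (t:ℤ)) i, (Xex m n h k : ℤ)
        = ((Finset.univ.filter fun key => h key ∈ W).card : ℤ) := by
      intro h
      rw [window_sum m n h (i - t) i (by omega) (by
        have : (t:ℤ) ≤ m := by exact_mod_cast htlt.le
        omega)]
    have hsplit : ∀ h : Fin n → ZMod m, Real.exp (c *
          (((∑ k ∈ Finset.Ioc (i - t) i, (Xex m n h k : ℤ)) - b * t : ℤ) : ℝ))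
        = Real.exp (-(c * b * t)) *
            Real.exp (c * ((Finset.univ.filter fun key => h key ∈ W).card : ℝ)) := by
      intro h
      rw [← Real.exp_add, hws h]
      congr 1
      push_cast
      ring
    rw [Finset.sum_congr rfl (fun h _ => hsplit h), ← Finset.mul_sum]
    congr 1
    rw [chernoff m n c W, hWcard]
  -- assemble
  have main : (∑ h : Fin n → ZMod m, Real.exp (c * (Qex b m n h i : ℝ))) / (m:ℝ)^n
      ≤ ∑ t ∈ Finset.range m, Real.exp (-(c * b * t)) *
          ((((m:ℝ) - t) + t * Real.exp c) ^ n / (m:ℝ)^n) := by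
    rw [div_le_iff₀ hmn]
    calc ∑ h : Fin n → ZMod m, Real.exp (c * (Qex b m n h i : ℝ))
        ≤ ∑ h : Fin n → ZMod m, ∑ t ∈ Finset.range m, Real.exp (c *
            (((∑ k ∈ Finset.Ioc (i - t) i, (Xex m n h k : ℤ)) - b * t : ℤ) : ℝ)) :=
          Finset.sum_le_sum (fun h _ => step1 h)
      _ = ∑ t ∈ Finset.range m, ∑ h : Fin n → ZMod m, Real.exp (c *
            (((∑ k ∈ Finset.Ioc (i - t) i, (Xex m n h k : ℤ)) - b * t : ℤ) : ℝ)) :=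
          Finset.sum_comm
      _ = ∑ t ∈ Finset.range m, Real.exp (-(c * b * t)) *
            ((((m:ℝ) - t) + t * Real.exp c) ^ n) := Finset.sum_congr rfl step2
      _ = (∑ t ∈ Finset.range m, Real.exp (-(c * b * t)) *
            ((((m:ℝ) - t) + t * Real.exp c) ^ n / (m:ℝ)^n)) * (m:ℝ)^n := by
          rw [Finset.sum_mul]
          refine Finset.sum_congr rfl fun t _ => ?_
          field_simp
  refine le_trans main ?_
  have hgeo : ∀ t ∈ Finset.range m, Real.exp (-(c * b * t)) *
      ((((m:ℝ) - t) + t * Real.exp c) ^ n / (m:ℝ)^n) ≤ (Real.exp (-δ)) ^ t := by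
    intro t htm
    refine le_trans (exp_window_bound b m n t c β δ hc0 hδ0.le hb1 hn hβ0 hkey
      (Finset.mem_range.mp htm)) ?_
    rw [← Real.exp_nat_mul]
    apply Real.exp_le_exp.mpr
    nlinarith [Nat.cast_nonneg (α := ℝ) t]
  refine le_trans (Finset.sum_le_sum hgeo) ?_
  have hr1 : Real.exp (-δ) < 1 := Real.exp_lt_one_iff.mpr (by linarith)
  have hr0 : (0:ℝ) ≤ Real.exp (-δ) := (Real.exp_pos _).le
  calc ∑ t ∈ Finset.range m, (Real.exp (-δ)) ^ t
      ≤ ∑' t : ℕ, (Real.exp (-δ)) ^ t :=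
        Summable.sum_le_tsum _ (fun t _ => by positivity) (summable_geometric_of_lt_one hr0 hr1)
    _ = (1 - Real.exp (-δ))⁻¹ := tsum_geometric_of_lt_one hr0 hr1


end auxlemmas

/-- uniform exponential moment bounds in the exact model. -/
theorem stmt_4 (b : ℕ) (hb : 1 ≤ b) (α₁ : ℝ) (hα₁ : α₁ < 1) :
    ∃ C c : ℝ, 0 < c ∧ ∀ m n : ℕ, 1 ≤ m → (n : ℝ) / ((b : ℝ) * (m : ℝ)) ≤ α₁ → ∀ i : ℤ,
      (∑' k : ℕ, Real.exp (c * k) *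
          ((Nat.card {h : Fin n → ZMod m // Hex b m n h i = (k : ℤ)} : ℝ) / (m : ℝ) ^ n)) ≤ C ∧
      (∑' k : ℕ, Real.exp (c * k) *
          ((Nat.card {h : Fin n → ZMod m // Qex b m n h i = (k : ℤ)} : ℝ) / (m : ℝ) ^ n)) ≤ C := by
  classical
  set β : ℝ := max α₁ 0 with hβdef
  have hβ0 : (0:ℝ) ≤ β := le_max_right _ _
  have hβ1 : β < 1 := max_lt hα₁ one_pos
  have he1 : (0:ℝ) < Real.exp 1 := Real.exp_pos 1
  set c : ℝ := (1 - β) / (2 * Real.exp 1) with hcdef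
  have hc0 : 0 < c := div_pos (by linarith) (by positivity)
  have hc1 : c ≤ 1 := by
    rw [hcdef, div_le_one (by positivity)]
    nlinarith [Real.exp_one_gt_d9]
  set δ : ℝ := (1 - β) * c / 2 with hδdef
  have hδ0 : 0 < δ := by
    rw [hδdef]
    apply div_pos (mul_pos (by linarith) hc0) two_pos
  have hce : c * Real.exp 1 = (1 - β) / 2 := by
    rw [hcdef]
    field_simp
  have hkey : β * (Real.exp c - 1) - c ≤ -δ := by
    have f3 : c + 1 ≤ Real.exp c := by linarith [Real.add_one_le_exp c]
    have f1 : Real.exp c - 1 ≤ c * Real.exp c := by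
      have h := mul_le_mul_of_nonneg_right (Real.add_one_le_exp (-c)) (Real.exp_pos c).le
      rw [← Real.exp_add, neg_add_cancel, Real.exp_zero] at h
      nlinarith [h]
    have f2 : Real.exp c ≤ Real.exp 1 := Real.exp_le_exp.mpr hc1
    have b1 : 0 ≤ (1 - β) * (Real.exp c - 1 - c) := mul_nonneg (by linarith) (by linarith)
    have b2 := mul_le_mul_of_nonneg_left f1 hc0.le
    have b3 := mul_le_mul_of_nonneg_left f2 (mul_nonneg hc0.le hc0.le)
    have b4 : c * (c * Real.exp 1) = c * ((1 - β) / 2) := by rw [hce]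
    rw [hδdef]
    nlinarith [b1, b2, b3, b4]
  refine ⟨Real.exp (c * b) * (1 - Real.exp (-δ))⁻¹, c, hc0, ?_⟩
  intro m n hm hmn i
  haveI : NeZero m := ⟨by omega⟩
  have hmpos : (0:ℝ) < m := by exact_mod_cast hm
  have hb1 : (1:ℝ) ≤ b := by exact_mod_cast hb
  have hbm : (0:ℝ) < (b:ℝ) * m := by positivity
  have hmn2 : (0:ℝ) < (m:ℝ)^n := by positivity
  have hn_le : (n:ℝ) ≤ β * ((b:ℝ) * (m:ℝ)) := by
    have h2 : (n:ℝ) / ((b:ℝ) * m) ≤ β := le_trans hmn (le_max_left _ _)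
    have h3 := mul_le_mul_of_nonneg_right h2 hbm.le
    rwa [div_mul_cancel₀ _ hbm.ne'] at h3
  have hnbm : (n:ℤ) ≤ (b:ℤ) * m := by
    have h3 : (n:ℝ) ≤ (b:ℝ) * m := le_trans hn_le (by nlinarith)
    exact_mod_cast h3
  have hQ := fun i' => Q_exp_bound b m n c β δ hc0 hδ0 hb1 hn_le hβ0 hkey hnbm i'
  have hC0pos : (0:ℝ) < (1 - Real.exp (-δ))⁻¹ := by
    have hlt : Real.exp (-δ) < 1 := Real.exp_lt_one_iff.mpr (by linarith)
    exact inv_pos.mpr (by linarith)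
  have hexpcb : (1:ℝ) ≤ Real.exp (c * b) := Real.one_le_exp (by positivity)
  constructor
  · -- H part
    rw [tsum_conv m n (n + b) c (fun h => Hex b m n h i)
        (fun h => Hex_nonneg b m n hnbm h i)
        (fun h => by
          have h1 := Hex_le b m n hnbm h i
          have h2 := Qex_le_n b m n hnbm h i
          push_cast
          omega)]
    have hpt : ∀ h : Fin n → ZMod m, Real.exp (c * ((Hex b m n h i : ℤ) : ℝ))
        ≤ Real.exp (c * b) * Real.exp (c * ((Qex b m n h i : ℤ) : ℝ)) := by
      intro h
      rw [← Real.exp_add]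
      apply Real.exp_le_exp.mpr
      have h1 := Hex_le b m n hnbm h i
      have h1' : ((Hex b m n h i : ℤ) : ℝ) ≤ ((Qex b m n h i : ℤ) : ℝ) + (b:ℝ) := by
        exact_mod_cast h1
      nlinarith [h1', hc0.le]
    calc (∑ h : Fin n → ZMod m, Real.exp (c * ((Hex b m n h i : ℤ) : ℝ))) / (m:ℝ)^n
        ≤ (∑ h : Fin n → ZMod m, Real.exp (c * b) *
            Real.exp (c * ((Qex b m n h i : ℤ) : ℝ))) / (m:ℝ)^n := by
          apply div_le_div_of_nonneg_right ?_ hmn2.le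
          exact Finset.sum_le_sum fun h _ => hpt h
      _ = Real.exp (c * b) *
            ((∑ h : Fin n → ZMod m, Real.exp (c * ((Qex b m n h i : ℤ) : ℝ))) / (m:ℝ)^n) := by
          rw [← Finset.mul_sum, mul_div_assoc]
      _ ≤ Real.exp (c * b) * (1 - Real.exp (-δ))⁻¹ :=
          mul_le_mul_of_nonneg_left (hQ i) (Real.exp_pos _).le
  · -- Q part
    rw [tsum_conv m n n c (fun h => Qex b m n h i)
        (fun h => Qex_nonneg b m n hnbm h i)
        (fun h => Qex_le_n b m n hnbm h i)]
    exact le_trans (hQ i) (le_mul_of_one_le_left hC0pos.le hexpcb)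
end
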